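/- Let r be a non-negative integer with r ≢ 2 (mod 5). Then the congruence ℓ² ≡ (30r+13)² (mod 48r+24) has infinitely many prime solutions ℓ with ℓ ≡ 1 or 19 (mod 30); in particular it is solvable. -/

import Mathlib

/-- Auxiliary: `30r+13` is coprime to `48r+24`. -/
lemma aux_coprime (r : ℕ) : Nat.Coprime (30 * r + 13) (48 * r + 24) := by
  set d := Nat.gcd (30 * r + 13) (48 * r + 24) with hd
  have hd1 : d ∣ 30 * r + 13 := Nat.gcd_dvd_left _ _
  have hd2 : d ∣ 48 * r + 24 := Nat.gcd_dvd_right _ _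
  have h16 : d ∣ 16 := by
    have h1 : d ∣ 5 * (48 * r + 24) := hd2.mul_left 5
    have h2 : d ∣ 8 * (30 * r + 13) := hd1.mul_left 8
    have := Nat.dvd_sub h1 h2
    simpa using (by omega : 5 * (48 * r + 24) - 8 * (30 * r + 13) = 16) ▸ this
  have hodd : ¬ 2 ∣ d := by
    intro h
    have := h.trans hd1
    omega
  have hle : d ≤ 16 := Nat.le_of_dvd (by norm_num) h16
  interval_cases d <;> omega

/-- For `r ≢ 2 (mod 5)`, the congruence `ℓ² ≡ (30r+13)² (mod 48r+24)` has infinitely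
many prime solutions `ℓ ≡ 1, 19 (mod 30)`. -/
theorem infinitely_many_prime_solutions (r : ℕ) (hr : r % 5 ≠ 2) :
    {ℓ : ℕ | ℓ.Prime ∧ (ℓ % 30 = 1 ∨ ℓ % 30 = 19) ∧
      (ℓ : ℤ) ^ 2 ≡ (30 * (r : ℤ) + 13) ^ 2 [ZMOD (48 * (r : ℤ) + 24)]}.Infinite := by
  have h5 : Nat.Coprime 5 (48 * r + 24) := by
    rw [Nat.Prime.coprime_iff_not_dvd (by norm_num)]
    omega
  obtain ⟨a, ha5, ham⟩ := Nat.chineseRemainder h5 1 (30 * r + 13)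
  -- a ≡ 1 [MOD 5], a ≡ 30r+13 [MOD 48r+24]
  have ha5' : a % 5 = 1 := by have : a % 5 = 1 % 5 := ha5; omega
  have ham' : a % (48 * r + 24) = (30 * r + 13) % (48 * r + 24) := ham
  set q : ℕ := 5 * (48 * r + 24) with hq
  haveI : NeZero q := ⟨by omega⟩
  have hco5 : Nat.Coprime a 5 := by
    have : ¬ (5 ∣ a) := by omega
    exact (Nat.coprime_comm.mp ((Nat.Prime.coprime_iff_not_dvd (by norm_num)).mpr this))
  have hcom : Nat.Coprime a (48 * r + 24) := by
    have key : Nat.gcd (48 * r + 24) a = Nat.gcd (48 * r + 24) (30 * r + 13) := by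
      rw [Nat.gcd_rec (48 * r + 24) a, Nat.gcd_rec (48 * r + 24) (30 * r + 13), ham']
    unfold Nat.Coprime
    rw [Nat.gcd_comm, key, Nat.gcd_comm]
    exact aux_coprime r
  have haq : Nat.Coprime a q := hco5.mul_right hcom
  have hunit : IsUnit (a : ZMod q) := (ZMod.isUnit_iff_coprime a q).mpr haq
  have hinf := Nat.infinite_setOfPred_prime_and_eq_mod hunit
  refine hinf.mono ?_
  rintro p ⟨hp, hpa⟩
  have hpq : p ≡ a [MOD q] := (ZMod.natCast_eq_natCast_iff p a q).mp hpa
  -- p ≡ 30r+13 mod 48r+24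
  have hdvd : (48 * r + 24) ∣ q := ⟨5, by ring⟩
  have hpm : p ≡ 30 * r + 13 [MOD 48 * r + 24] := (hpq.of_dvd hdvd).trans ham
  -- p % 30 = 1
  have h30 : (30 : ℕ) ∣ q := ⟨8 * r + 4, by ring⟩
  have hp30 : p % 30 = a % 30 := hpq.of_dvd h30
  have h6dvd : (6 : ℕ) ∣ (48 * r + 24) := ⟨8 * r + 4, by ring⟩
  have ha6 : a % 6 = (30 * r + 13) % 6 := ham.of_dvd h6dvd
  have ha30 : a % 30 = 1 := by omega
  refine ⟨hp, Or.inl (by omega), ?_⟩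
  have hint : (p : ℤ) ≡ ((30 * r + 13 : ℕ) : ℤ) [ZMOD ((48 * r + 24 : ℕ) : ℤ)] :=
    Int.natCast_modEq_iff.mpr hpm
  have hint2 := hint.pow 2
  push_cast at hint2
  convert hint2 using 2
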